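/- Let G be a thick spider with body K = {k1,...,kn} and feet S = {s1,...,sn} (n ≥ 2), where ki is adjacent to sj iff i ≠ j, and with empty head. Then the set of edges {ki, sj} with i < j, of size C(n,2), is a minimum-size edge set whose deletion makes G P4-free. -/

import Mathlib

open SimpleGraph

/-- The four (distinct) vertices `a, b, c, d` induce a path `a - b - c - d` in `G`. -/
def IsInducedP4 {V : Type*} (G : SimpleGraph V) (a b c d : V) : Prop :=
  a ≠ b ∧ a ≠ c ∧ a ≠ d ∧ b ≠ c ∧ b ≠ d ∧ c ≠ d ∧
  G.Adj a b ∧ G.Adj b c ∧ G.Adj c d ∧ ¬ G.Adj a c ∧ ¬ G.Adj a d ∧ ¬ G.Adj b d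

/-- A graph is `P₄`-free if no four vertices induce a path on four vertices. -/
def P4Free {V : Type*} (G : SimpleGraph V) : Prop := ∀ a b c d : V, ¬ IsInducedP4 G a b c d

/-- The thick spider with empty head: body `K = {inl i}` is a clique, feet `S = {inr i}` form a
stable set, and `inl i` is adjacent to `inr j` iff `i ≠ j`. -/
def thickSpider (n : ℕ) : SimpleGraph (Fin n ⊕ Fin n) :=
  SimpleGraph.fromRel (fun a b =>
    match a, b with
    | Sum.inl i, Sum.inl j => i ≠ j
    | Sum.inl i, Sum.inr j => i ≠ j
    | Sum.inr _, _ => False)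

lemma ts_adj_ll {n : ℕ} {i j : Fin n} : (thickSpider n).Adj (.inl i) (.inl j) ↔ i ≠ j := by
  simp [thickSpider]; tauto

lemma ts_adj_lr {n : ℕ} {i j : Fin n} : (thickSpider n).Adj (.inl i) (.inr j) ↔ i ≠ j := by
  simp [thickSpider]

lemma ts_adj_rl {n : ℕ} {i j : Fin n} : (thickSpider n).Adj (.inr i) (.inl j) ↔ j ≠ i := by
  simp [thickSpider]

lemma ts_adj_rr {n : ℕ} {i j : Fin n} : ¬ (thickSpider n).Adj (.inr i) (.inr j) := by
  simp [thickSpider]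

lemma cardP (n : ℕ) :
    (Finset.univ.filter (fun p : Fin n × Fin n => p.1 < p.2)).card = n.choose 2 := by
  rw [Nat.choose_two_right, ← Finset.sum_range_id, Finset.card_filter,
    ← Finset.univ_product_univ, Finset.sum_product_right, ← Fin.sum_univ_eq_sum_range]
  refine Finset.sum_congr rfl fun j _ => ?_
  rw [← Finset.card_filter]
  have : Finset.univ.filter (fun i : Fin n => i < j) = Finset.Iio j := by
    ext i; simp
  rw [this, Fin.card_Iio]

/-- In the thick spider with empty head, body `{k₁, …, kₙ}` and feet
`{s₁, …, sₙ}` (`n ≥ 2`), the set of edges `{kᵢ, sⱼ}` with `i < j`, of size `C(n,2)`,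
is a minimum-size edge set whose deletion makes the graph `P₄`-free. -/
theorem thickSpider_min_cograph_edge_deletion (n : ℕ) (hn : 2 ≤ n)
    (T : Finset (Sym2 (Fin n ⊕ Fin n)))
    (hT : T = (Finset.univ.filter (fun p : Fin n × Fin n => p.1 < p.2)).image
      (fun p : Fin n × Fin n => s(Sum.inl p.1, Sum.inr p.2))) :
    T.card = n.choose 2 ∧ P4Free ((thickSpider n).deleteEdges ↑T) ∧
      ∀ E' : Finset (Sym2 (Fin n ⊕ Fin n)),
        P4Free ((thickSpider n).deleteEdges ↑E') → n.choose 2 ≤ E'.card := by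
  subst hT
  set P := Finset.univ.filter (fun p : Fin n × Fin n => p.1 < p.2) with hP
  set T := P.image (fun p : Fin n × Fin n => s(Sum.inl p.1, Sum.inr p.2)) with hT
  -- membership in T
  have memT : ∀ e : Sym2 (Fin n ⊕ Fin n),
      e ∈ T ↔ ∃ i j : Fin n, i < j ∧ e = s(Sum.inl i, Sum.inr j) := by
    intro e
    simp only [hT, Finset.mem_image, Finset.mem_filter, Finset.mem_univ, true_and, hP]
    constructor
    · rintro ⟨⟨i, j⟩, hij, rfl⟩; exact ⟨i, j, hij, rfl⟩
    · rintro ⟨i, j, hij, rfl⟩; exact ⟨⟨i, j⟩, hij, rfl⟩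
  refine ⟨?_, ?_, ?_⟩
  · -- cardinality
    rw [hT, Finset.card_image_of_injOn, cardP]
    rintro ⟨i, j⟩ _ ⟨i', j'⟩ _ h
    simp only [Sym2.eq_iff, Sum.inl.injEq, Sum.inr.injEq, reduceCtorEq, and_false,
      false_and, or_false] at h
    simp [h.1, h.2]
  · -- P4-freeness
    set G' := (thickSpider n).deleteEdges ↑T with hG'
    have h_ll : ∀ i j : Fin n, G'.Adj (.inl i) (.inl j) ↔ i ≠ j := by
      intro i j
      rw [hG', SimpleGraph.deleteEdges_adj, ts_adj_ll]
      simp only [Finset.mem_coe, memT, and_iff_left_iff_imp]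
      rintro - ⟨a, b, -, h⟩
      simp [Sym2.eq_iff] at h
    have h_lr : ∀ i j : Fin n, G'.Adj (.inl i) (.inr j) ↔ j < i := by
      intro i j
      rw [hG', SimpleGraph.deleteEdges_adj, ts_adj_lr]
      simp only [Finset.mem_coe, memT]
      constructor
      · rintro ⟨hne, h⟩
        rcases lt_or_gt_of_ne hne with h' | h'
        · exact absurd ⟨i, j, h', rfl⟩ h
        · exact h'
      · intro h
        refine ⟨(ne_of_lt h).symm, ?_⟩
        rintro ⟨a, b, hab, he⟩
        simp only [Sym2.eq_iff, Sum.inl.injEq, Sum.inr.injEq, reduceCtorEq, and_false,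
          false_and, or_false] at he
        obtain ⟨rfl, rfl⟩ := he
        exact absurd hab (not_lt.2 h.le)
    have h_rl : ∀ i j : Fin n, G'.Adj (.inr i) (.inl j) ↔ i < j := by
      intro i j; rw [SimpleGraph.adj_comm]; exact h_lr j i
    have h_rr : ∀ i j : Fin n, ¬ G'.Adj (.inr i) (.inr j) := by
      intro i j h
      exact ts_adj_rr (SimpleGraph.deleteEdges_adj.1 h).1
    rintro a b c d ⟨hab, hac, had, hbc, hbd, hcd, Hab, Hbc, Hcd, Nac, Nad, Nbd⟩
    rcases b with i | x
    · rcases c with i' | x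
      · -- b = inl i, c = inl i'
        rcases a with a' | x
        · exact Nac ((h_ll a' i').2 (fun h => hac (by rw [h])))
        · rcases d with d' | y
          · exact Nbd ((h_ll i d').2 (fun h => hbd (by rw [h])))
          · have h1 : x < i := (h_rl x i).1 Hab
            have h2 : ¬ x < i' := fun h => Nac ((h_rl x i').2 h)
            have h3 : y < i' := (h_lr i' y).1 Hcd
            have h4 : ¬ y < i := fun h => Nbd ((h_lr i y).2 h)
            rw [Fin.lt_def] at h1 h2 h3 h4
            omega
      · -- b = inl i, c = inr x
        rcases d with j | y
        · have : i = j := by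
            by_contra h
            exact Nbd ((h_ll i j).2 h)
          exact hbd (by rw [this])
        · exact h_rr x y Hcd
    · rcases c with i | y'
      · -- b = inr x, c = inl i
        rcases a with a' | y
        · have : a' = i := by
            by_contra h
            exact Nac ((h_ll a' i).2 h)
          exact hac (by rw [this])
        · exact h_rr y x Hab
      · exact h_rr x y' Hbc
  · -- lower bound
    intro E' hfree
    rw [← cardP n]
    classical
    refine Finset.card_le_card_of_injOn
      (fun p => if s(Sum.inl p.1, Sum.inl p.2) ∈ E' then s(Sum.inl p.1, Sum.inl p.2)
        else if s(Sum.inl p.2, Sum.inr p.1) ∈ E' then s(Sum.inl p.2, Sum.inr p.1)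
        else s(Sum.inl p.1, Sum.inr p.2)) ?_ ?_
    · rintro ⟨i, j⟩ hp
      simp only [Finset.coe_filter, Set.mem_setOf_eq, Finset.mem_coe, Finset.mem_filter, Finset.mem_univ, true_and] at hp
      dsimp only
      split_ifs with h1 h2
      · exact h1
      · exact h2
      · -- otherwise we exhibit an induced P4
        by_contra h3
        set G'' := (thickSpider n).deleteEdges ↑E' with hG''
        have hij : i ≠ j := ne_of_lt hp
        refine hfree (Sum.inr i) (Sum.inl j) (Sum.inl i) (Sum.inr j)
          ⟨by simp, by simp, by simp [hij], by simp [hij.symm], by simp, by simp [hij], ?_, ?_, ?_, ?_, ?_, ?_⟩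
        · rw [SimpleGraph.deleteEdges_adj]
          refine ⟨ts_adj_rl.2 hij.symm, ?_⟩
          rw [Finset.mem_coe, show s(Sum.inr i, (Sum.inl j : Fin n ⊕ Fin n)) = s(Sum.inl j, Sum.inr i) from Sym2.eq_swap]
          exact h2
        · rw [SimpleGraph.deleteEdges_adj]
          refine ⟨ts_adj_ll.2 hij.symm, ?_⟩
          rw [Finset.mem_coe, show s((Sum.inl j : Fin n ⊕ Fin n), Sum.inl i) = s(Sum.inl i, Sum.inl j) from Sym2.eq_swap]
          exact h1
        · rw [SimpleGraph.deleteEdges_adj]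
          exact ⟨ts_adj_lr.2 hij, h3⟩
        · intro h
          exact (ts_adj_rl.1 (SimpleGraph.deleteEdges_adj.1 h).1) rfl
        · intro h
          exact ts_adj_rr (SimpleGraph.deleteEdges_adj.1 h).1
        · intro h
          exact (ts_adj_lr.1 (SimpleGraph.deleteEdges_adj.1 h).1) rfl
    · rintro ⟨i, j⟩ hp ⟨i', j'⟩ hq h
      simp only [Finset.coe_filter, Set.mem_setOf_eq, Finset.mem_univ, true_and] at hp hq
      dsimp only at h
      simp only [Fin.lt_def] at hp hq
      split_ifs at h <;>
        (simp only [Prod.mk.injEq, Fin.ext_iff]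
         rcases (Sym2.eq_iff.mp h) with ⟨ha, hb⟩ | ⟨ha, hb⟩ <;>
           simp only [Sum.inl.injEq, Sum.inr.injEq, reduceCtorEq, Fin.ext_iff] at ha hb <;>
           omega)
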